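/- Let f : [0,1]^d → ℝ have the form f(x) = f(0) + λ·ν([0,x]) where λ ≥ 0 and ν is a probability measure on [0,1]^d. If the points 1 − x_1, …, 1 − x_n ∈ [0,1]^d have nonnegative local discrepancy, then (1/n)·Σ_{i=1}^{n} f(x_i) ≥ ∫_{[0,1]^d} f(x) dx. -/

import Mathlib

open MeasureTheory Finset
open scoped ENNReal

/-- If `f(x) = f(0) + λ·ν([0,x])` for a probability measure `ν` on `[0,1]^d` and `λ ≥ 0`
(i.e. `f` is right-continuous completely monotone), and the reflected points `1 - x i`
have nonnegative local discrepancy, then the QMC average of `f` over the points `x i`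
is an upper bound for the integral of `f` over `[0,1]^d`. -/
theorem nnld_upper_bound_complete_monotone (d n : ℕ) (hn : 1 ≤ n)
    (f : (Fin d → ℝ) → ℝ) (l : ℝ) (hl : 0 ≤ l)
    (ν : Measure (Fin d → ℝ)) [IsProbabilityMeasure ν]
    (hνcube : ν (Set.Icc (0 : Fin d → ℝ) 1) = 1)
    (hf : ∀ x ∈ Set.Icc (0 : Fin d → ℝ) 1,
      f x = f 0 + l * (ν (Set.Icc (0 : Fin d → ℝ) x)).toReal)
    (x : Fin n → Fin d → ℝ) (hx : ∀ i j, x i j ∈ Set.Icc (0 : ℝ) 1)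
    (hNNLD : ∀ a : Fin d → ℝ, (∀ j, a j ∈ Set.Icc (0 : ℝ) 1) →
      ∏ j, a j ≤
        ((Finset.univ.filter fun i => ∀ j, 1 - x i j < a j).card : ℝ) / n) :
    ∫ y in Set.Icc (0 : Fin d → ℝ) 1, f y ∂volume ≤ (1 / (n : ℝ)) * ∑ i, f (x i) := by
  classical
  have hnR : (0:ℝ) < n := by exact_mod_cast hn
  set C : Set (Fin d → ℝ) := Set.Icc 0 1 with hCdef
  have hCmeas : MeasurableSet C := measurableSet_Icc
  have hvolC : volume C = 1 := by
    rw [hCdef, Real.volume_Icc_pi]; simp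
  -- the set S = {(y,a) | a ∈ [0,y]} and measurability of y ↦ ν [0,y]
  set S : Set ((Fin d → ℝ) × (Fin d → ℝ)) := {p | 0 ≤ p.2 ∧ p.2 ≤ p.1} with hSdef
  have hSmeas : MeasurableSet S := by
    exact ((isClosed_le continuous_const continuous_snd).inter
      (isClosed_le continuous_snd continuous_fst)).measurableSet
  have hFmeas : Measurable fun y : Fin d → ℝ => ν (Set.Icc 0 y) := by
    have h := measurable_measure_prodMk_left (ν := ν) hSmeas
    have heq : ∀ y : Fin d → ℝ, Prod.mk y ⁻¹' S = Set.Icc 0 y := by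
      intro y; ext a; simp [hSdef, Set.mem_Icc]
    simpa [heq] using h
  -- a.e. membership in the cube w.r.t. ν
  have haeC : ∀ᵐ a ∂ν, a ∈ C := by
    rw [MeasureTheory.ae_iff]
    have h0 : {a : Fin d → ℝ | ¬ a ∈ C} = Cᶜ := rfl
    rw [h0, measure_compl hCmeas (measure_ne_top _ _), hνcube, measure_univ, tsub_self]
  -- the key lintegral inequality
  have hL_le : ∫⁻ y in C, ν (Set.Icc 0 y) ∂volume
      ≤ (n : ℝ≥0∞)⁻¹ * ∑ i, ν (Set.Icc 0 (x i)) := by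
    have step1 : ∫⁻ y in C, ν (Set.Icc 0 y) ∂volume
        = ∫⁻ y in C, ∫⁻ a, S.indicator 1 (y, a) ∂ν ∂volume := by
      refine lintegral_congr fun y => ?_
      have hpt : ∀ a, S.indicator (1 : ((Fin d → ℝ) × (Fin d → ℝ)) → ℝ≥0∞) (y, a)
          = (Set.Icc 0 y).indicator 1 a := by
        intro a; simp [Set.indicator_apply, hSdef, Set.mem_Icc]
      simp only [hpt]
      rw [lintegral_indicator_one measurableSet_Icc]
    have step2 : ∫⁻ y in C, ∫⁻ a, S.indicator 1 (y, a) ∂ν ∂volume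
        = ∫⁻ a, ∫⁻ y in C, S.indicator 1 (y, a) ∂volume ∂ν := by
      exact lintegral_lintegral_swap ((measurable_one.indicator hSmeas).aemeasurable)
    rw [step1, step2]
    have step3 : ∫⁻ a, ∫⁻ y in C, S.indicator 1 (y, a) ∂volume ∂ν
        ≤ ∫⁻ a, (n : ℝ≥0∞)⁻¹ * ∑ i, (Set.Icc 0 (x i)).indicator 1 a ∂ν := by
      refine lintegral_mono_ae (haeC.mono fun a ha => ?_)
      have ha0 : (0 : Fin d → ℝ) ≤ a := ha.1
      have ha1 : a ≤ 1 := ha.2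
      -- compute the inner integral
      have hpt : ∀ y, S.indicator (1 : ((Fin d → ℝ) × (Fin d → ℝ)) → ℝ≥0∞) (y, a)
          = (Set.Ici a).indicator 1 y := by
        intro y
        simp only [Set.indicator_apply, hSdef, Set.mem_setOf_eq, Set.mem_Ici]
        by_cases h : a ≤ y
        · simp [h, ha0]
        · simp [h]
      have hinner : ∫⁻ y in C, S.indicator 1 (y, a) ∂volume
          = ∏ j, ENNReal.ofReal (1 - a j) := by
        simp only [hpt]
        rw [lintegral_indicator_one measurableSet_Ici,
          Measure.restrict_apply measurableSet_Ici]
        have hIC : Set.Ici a ∩ C = Set.Icc a 1 := by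
          ext y
          simp only [Set.mem_inter_iff, Set.mem_Ici, hCdef, Set.mem_Icc]
          constructor
          · rintro ⟨h1, _, h2⟩; exact ⟨h1, h2⟩
          · rintro ⟨h1, h2⟩; exact ⟨h1, le_trans ha0 h1, h2⟩
        rw [hIC, Real.volume_Icc_pi]
        rfl
      rw [hinner]
      -- the combinatorial bound
      have hmem : ∀ j, (1 : ℝ) - a j ∈ Set.Icc (0:ℝ) 1 := by
        intro j
        constructor
        · have := ha1 j; simp only [Pi.one_apply] at this; linarith
        · have := ha0 j; simp only [Pi.zero_apply] at this; linarith
      have hcard := hNNLD (fun j => 1 - a j) hmem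
      set c1 := (Finset.univ.filter fun i => ∀ j, 1 - x i j < 1 - a j).card with hc1
      set c2 := (Finset.univ.filter fun i => a ≤ x i).card with hc2
      have hc12 : c1 ≤ c2 := by
        refine Finset.card_le_card (Finset.monotone_filter_right _ fun i _ hi => ?_)
        intro j
        have := hi j
        linarith
      have hreal : ∏ j, (1 - a j) ≤ (c2 : ℝ) / n := by
        refine le_trans hcard ?_
        gcongr
      -- sum of indicators = c2
      have hsum : ∑ i, (Set.Icc 0 (x i)).indicator (1 : (Fin d → ℝ) → ℝ≥0∞) a
          = (c2 : ℝ≥0∞) := by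
        have hii : ∀ i : Fin n, (Set.Icc 0 (x i)).indicator (1 : (Fin d → ℝ) → ℝ≥0∞) a
            = if a ≤ x i then 1 else 0 := by
          intro i
          simp [Set.indicator_apply, Set.mem_Icc, ha0]
        rw [Finset.sum_congr rfl fun i _ => hii i, Finset.sum_boole]
      rw [hsum]
      calc ∏ j, ENNReal.ofReal (1 - a j)
          = ENNReal.ofReal (∏ j, (1 - a j)) := by
            rw [ENNReal.ofReal_prod_of_nonneg]
            intro j _
            exact (hmem j).1
        _ ≤ ENNReal.ofReal ((c2 : ℝ) / n) := ENNReal.ofReal_le_ofReal hreal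
        _ = (n : ℝ≥0∞)⁻¹ * (c2 : ℝ≥0∞) := by
            rw [ENNReal.ofReal_div_of_pos hnR, ENNReal.ofReal_natCast,
              ENNReal.ofReal_natCast, ENNReal.div_eq_inv_mul]
    refine le_trans step3 (le_of_eq ?_)
    rw [lintegral_const_mul' _ _ (by simpa using Nat.one_le_iff_ne_zero.mp hn : (n : ℝ≥0∞)⁻¹ ≠ ⊤)]
    rw [lintegral_finset_sum _ (fun i _ => measurable_one.indicator measurableSet_Icc)]
    simp_rw [lintegral_indicator_one measurableSet_Icc]
  -- finiteness facts
  have hLfin : ∫⁻ y in C, ν (Set.Icc 0 y) ∂volume ≠ ⊤ := by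
    refine ne_top_of_le_ne_top ?_ (lintegral_mono fun y => prob_le_one)
    rw [setLIntegral_one, hvolC]
    exact ENNReal.one_ne_top
  have hRfin : ∑ i, ν (Set.Icc 0 (x i)) ≠ ⊤ :=
    (ENNReal.sum_lt_top.2 fun i _ => measure_lt_top _ _).ne
  haveI : IsFiniteMeasure (volume.restrict C) :=
    ⟨by rw [Measure.restrict_apply_univ, hvolC]; exact ENNReal.one_lt_top⟩
  -- real version of the key inequality
  have hg_int : Integrable (fun y => (ν (Set.Icc 0 y)).toReal) (volume.restrict C) :=
    integrable_toReal_of_lintegral_ne_top hFmeas.aemeasurable.restrict hLfin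
  have hg_val : ∫ y in C, (ν (Set.Icc 0 y)).toReal ∂volume
      = (∫⁻ y in C, ν (Set.Icc 0 y) ∂volume).toReal :=
    integral_toReal hFmeas.aemeasurable.restrict
      (Filter.Eventually.of_forall fun y => measure_lt_top _ _)
  have hreal_key : ∫ y in C, (ν (Set.Icc 0 y)).toReal ∂volume
      ≤ (1 / (n:ℝ)) * ∑ i, (ν (Set.Icc 0 (x i))).toReal := by
    rw [hg_val]
    have h1 : ((n : ℝ≥0∞)⁻¹ * ∑ i, ν (Set.Icc 0 (x i))).toReal
        = (1 / (n:ℝ)) * ∑ i, (ν (Set.Icc 0 (x i))).toReal := by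
      rw [ENNReal.toReal_mul, ENNReal.toReal_inv, ENNReal.toReal_natCast,
        ENNReal.toReal_sum (fun i _ => measure_ne_top _ _), one_div]
    rw [← h1]
    exact ENNReal.toReal_mono
      (ENNReal.mul_ne_top (by simpa using Nat.one_le_iff_ne_zero.mp hn) hRfin) hL_le
  -- rewrite the LHS integral
  have hLHS : ∫ y in C, f y ∂volume
      = f 0 + l * ∫ y in C, (ν (Set.Icc 0 y)).toReal ∂volume := by
    rw [setIntegral_congr_fun hCmeas hf]
    rw [integral_add (integrable_const _) (hg_int.const_mul l)]
    rw [setIntegral_const, integral_const_mul, measureReal_def, hvolC]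
    simp
  -- rewrite the RHS sum
  have hRHS : (1 / (n : ℝ)) * ∑ i, f (x i)
      = f 0 + l * ((1 / (n:ℝ)) * ∑ i, (ν (Set.Icc 0 (x i))).toReal) := by
    have hxC : ∀ i, x i ∈ C := fun i => ⟨fun j => (hx i j).1, fun j => (hx i j).2⟩
    have : ∑ i, f (x i) = ∑ i, (f 0 + l * (ν (Set.Icc 0 (x i))).toReal) :=
      Finset.sum_congr rfl fun i _ => hf (x i) (hxC i)
    rw [this, Finset.sum_add_distrib, Finset.sum_const, ← Finset.mul_sum]
    simp only [Finset.card_univ, Fintype.card_fin, nsmul_eq_mul]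
    field_simp
  rw [hLHS, hRHS]
  have := mul_le_mul_of_nonneg_left hreal_key hl
  linarith
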